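/- Let S be a Dedekind domain, R a subring of S that is a Dedekind domain, and I an ideal of S with I ∩ R ≠ {0}. For each prime ideal Q of S containing I, set e_Q = v_Q((Q ∩ R)S) and f_Q = dim_{R/(Q∩R)}(S/Q). Then I is an R-conductor ideal of S if and only if every prime ideal M of S containing I satisfies at least one of: (a) f_M ≥ 2; (b) e_M does not divide v_M(I) − 1; (c) (v_M(I) − 1)/e_M < v_Q(I)/e_Q for some prime ideal Q ≠ M of S containing I with Q ∩ R = M ∩ R. -/

import Mathlib

/-- The conductor `(A :_S S) = {x ∈ S | x * S ⊆ A}` of an additive subgroup `A` of `S`,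
as an ideal of `S`. -/
def condIdeal {S : Type*} [CommRing S] (A : AddSubgroup S) : Ideal S where
  carrier := {x : S | ∀ s : S, x * s ∈ A}
  add_mem' := by
    intro x y hx hy s
    simpa [add_mul] using A.add_mem (hx s) (hy s)
  zero_mem' := by
    intro s
    simpa using A.zero_mem
  smul_mem' := by
    intro c x hx s
    have := hx (c * s)
    simpa [smul_eq_mul, mul_assoc, mul_comm, mul_left_comm] using this

/-- `R + I = {r + a | r ∈ R, a ∈ I}` as an additive subgroup of `S`. -/
def addSub {S : Type*} [CommRing S] (R : Subring S) (I : Ideal S) : AddSubgroup S where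
  carrier := {x : S | ∃ r ∈ R, ∃ a ∈ I, x = r + a}
  zero_mem' := ⟨0, R.zero_mem, 0, I.zero_mem, by simp⟩
  add_mem' := by
    rintro x y ⟨r, hr, a, ha, rfl⟩ ⟨r', hr', a', ha', rfl⟩
    exact ⟨r + r', R.add_mem hr hr', a + a', I.add_mem ha ha', by ring⟩
  neg_mem' := by
    rintro x ⟨r, hr, a, ha, rfl⟩
    exact ⟨-r, R.neg_mem hr, -a, I.neg_mem ha, by ring⟩

/-- `I` is an `R`-conductor ideal of `S` if `I = (V :_S S)` for some intermediate ring
`R ⊆ V ⊆ S`. -/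
def IsConductorIdeal {S : Type*} [CommRing S] (R : Subring S) (I : Ideal S) : Prop :=
  ∃ V : Subring S, R ≤ V ∧ I = condIdeal V.toAddSubgroup

/-- The `P`-adic exponent `v_P(A)` of an ideal `A`: the largest `l ∈ ℕ` such that
`A ⊆ P ^ l`. -/
noncomputable def padicExp {D : Type*} [CommRing D] (P A : Ideal D) : ℕ :=
  sSup {l : ℕ | A ≤ P ^ l}

open UniqueFactorizationMonoid Multiset

section DedHelpers

variable {D : Type*} [CommRing D] [IsDomain D] [IsDedekindDomain D] [DecidableEq (Ideal D)]

theorem le_pow_iff_count {P A : Ideal D} (hP : P.IsPrime) (hP0 : P ≠ ⊥) (hA : A ≠ ⊥) (l : ℕ) :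
    A ≤ P ^ l ↔ l ≤ Multiset.count P (normalizedFactors A) := by
  have hPp : Prime P := Ideal.prime_of_isPrime hP0 hP
  rw [← Ideal.dvd_iff_le, dvd_iff_normalizedFactors_le_normalizedFactors (pow_ne_zero l hP0) hA,
    normalizedFactors_pow, normalizedFactors_irreducible hPp.irreducible, normalize_eq,
    Multiset.nsmul_singleton, ← Multiset.le_count_iff_replicate_le]

theorem padicExp_eq_count {P A : Ideal D} (hP : P.IsPrime) (hP0 : P ≠ ⊥) (hA : A ≠ ⊥) :
    padicExp P A = Multiset.count P (normalizedFactors A) := by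
  unfold padicExp
  have h : {l : ℕ | A ≤ P ^ l} = Set.Iic (Multiset.count P (normalizedFactors A)) := by
    ext l; exact le_pow_iff_count hP hP0 hA l
  rw [h, csSup_Iic]

theorem le_pow_iff_padicExp {P A : Ideal D} (hP : P.IsPrime) (hP0 : P ≠ ⊥) (hA : A ≠ ⊥) (l : ℕ) :
    A ≤ P ^ l ↔ l ≤ padicExp P A := by
  rw [padicExp_eq_count hP hP0 hA]; exact le_pow_iff_count hP hP0 hA l

theorem le_pow_padicExp {P A : Ideal D} (hP : P.IsPrime) (hP0 : P ≠ ⊥) (hA : A ≠ ⊥) :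
    A ≤ P ^ padicExp P A :=
  (le_pow_iff_padicExp hP hP0 hA _).mpr le_rfl

theorem padicExp_mul {P A B : Ideal D} (hP : P.IsPrime) (hP0 : P ≠ ⊥) (hA : A ≠ ⊥) (hB : B ≠ ⊥) :
    padicExp P (A * B) = padicExp P A + padicExp P B := by
  rw [padicExp_eq_count hP hP0 hA, padicExp_eq_count hP hP0 hB,
    padicExp_eq_count hP hP0 (mul_ne_zero hA hB), normalizedFactors_mul hA hB,
    Multiset.count_add]

theorem padicExp_prime_pow {P : Ideal D} (hP : P.IsPrime) (hP0 : P ≠ ⊥) (n : ℕ) :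
    padicExp P (P ^ n) = n := by
  have hPp : Prime P := Ideal.prime_of_isPrime hP0 hP
  rw [padicExp_eq_count hP hP0 (pow_ne_zero n hP0), normalizedFactors_pow,
    normalizedFactors_irreducible hPp.irreducible, normalize_eq, Multiset.nsmul_singleton,
    Multiset.count_replicate_self]

theorem padicExp_top {P : Ideal D} (hP : P.IsPrime) (hP0 : P ≠ ⊥) :
    padicExp P (⊤ : Ideal D) = 0 := by
  simpa using padicExp_prime_pow hP hP0 0

theorem padicExp_eq_zero_of_not_le {P A : Ideal D} (hP : P.IsPrime) (hP0 : P ≠ ⊥) (hA : A ≠ ⊥)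
    (h : ¬ A ≤ P) : padicExp P A = 0 := by
  by_contra h0
  exact h (((le_pow_iff_padicExp hP hP0 hA 1).mpr (by omega)).trans (by rw [pow_one]))

theorem mem_pow_iff_padicExp {P : Ideal D} (hP : P.IsPrime) (hP0 : P ≠ ⊥) {x : D}
    (hx : x ≠ 0) (l : ℕ) : x ∈ P ^ l ↔ l ≤ padicExp P (Ideal.span {x}) := by
  rw [← le_pow_iff_padicExp hP hP0 (by simpa using hx), Ideal.span_singleton_le_iff_mem]

theorem padicExp_span_eq {P : Ideal D} (hP : P.IsPrime) (hP0 : P ≠ ⊥) {x : D} {k : ℕ}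
    (h1 : x ∈ P ^ k) (h2 : x ∉ P ^ (k + 1)) : padicExp P (Ideal.span {x}) = k := by
  have hx : x ≠ 0 := fun h => h2 (h ▸ zero_mem _)
  have ha := (mem_pow_iff_padicExp hP hP0 hx k).mp h1
  have hb : ¬ (k + 1 ≤ padicExp P (Ideal.span {x})) :=
    fun h => h2 ((mem_pow_iff_padicExp hP hP0 hx (k + 1)).mpr h)
  omega

theorem exists_exact_val (P : Ideal D) (hP : P.IsPrime) (hP0 : P ≠ ⊥)
    (T : Finset (Ideal D)) (hT : ∀ Q ∈ T, Q.IsPrime ∧ Q ≠ ⊥ ∧ Q ≠ P) (k N : ℕ) :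
    ∃ r : D, r ∈ P ^ k ∧ r ∉ P ^ (k + 1) ∧ ∀ Q ∈ T, r ∈ Q ^ N := by
  have hPmax : P.IsMaximal := Ring.DimensionLEOne.maximalOfPrime hP0 hP
  set Pr : Ideal D := ∏ Q ∈ T, Q ^ N with hPr
  have hPr0 : Pr ≠ ⊥ := by
    rw [hPr, ← Ideal.zero_eq_bot, Finset.prod_ne_zero_iff]
    intro Q hQ
    rw [Ideal.zero_eq_bot]
    exact pow_ne_zero _ (hT Q hQ).2.1
  have hJ0 : P ^ k * Pr ≠ ⊥ := mul_ne_zero (pow_ne_zero _ hP0) hPr0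
  have hlt : P ^ (k + 1) * Pr < P ^ k * Pr := by
    refine lt_of_le_of_ne (Ideal.mul_mono_left (Ideal.pow_le_pow_right (Nat.le_succ _))) ?_
    intro h
    have h2 : P * (P ^ k * Pr) = 1 * (P ^ k * Pr) := by
      rw [one_mul, ← mul_assoc, ← pow_succ']
      exact h
    exact hP.ne_top (by simpa [Ideal.one_eq_top] using mul_right_cancel₀ hJ0 h2)
  obtain ⟨r, hr1, hr2⟩ := SetLike.exists_of_lt hlt
  have hrP : r ∈ P ^ k := Ideal.mul_le_left hr1
  have hPrQ : ∀ Q ∈ T, Pr ≤ Q ^ N := fun Q hQ =>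
    Ideal.le_of_dvd (Finset.dvd_prod_of_mem (fun Q => Q ^ N) hQ)
  have hrPr : r ∈ Pr := Ideal.mul_le_right hr1
  refine ⟨r, hrP, fun hrP1 => hr2 ?_, fun Q hQ => hPrQ Q hQ hrPr⟩
  have hPrnle : ¬ Pr ≤ P := by
    rw [hPr]
    intro hle
    obtain ⟨Q, hQT, hQle⟩ := (Ideal.IsPrime.prod_le hP).mp hle
    have hQP : Q ≤ P := hP.le_of_pow_le hQle
    exact (hT Q hQT).2.2 (((hT Q hQT).1.isMaximal (hT Q hQT).2.1).eq_of_le hP.ne_top hQP)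
  have hcop : IsCoprime (P ^ (k + 1)) Pr := by
    refine IsCoprime.pow_left ?_
    rw [Ideal.isCoprime_iff_sup_eq]
    by_contra hne
    exact hPrnle (le_sup_right.trans (le_of_eq (hPmax.eq_of_le hne le_sup_left).symm))
  have hmem : r ∈ P ^ (k + 1) ⊓ Pr := ⟨hrP1, hrPr⟩
  rwa [Ideal.inf_eq_mul_of_isCoprime hcop] at hmem

theorem pow_le_span_sup {P : Ideal D} (hP : P.IsPrime) (hP0 : P ≠ ⊥) {r : D} {k : ℕ}
    (h1 : r ∈ P ^ k) (h2 : r ∉ P ^ (k + 1)) :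
    P ^ k ≤ Ideal.span {r} ⊔ P ^ (k + 1) := by
  have hle : Ideal.span {r} ⊔ P ^ (k + 1) ≤ P ^ k :=
    sup_le ((Ideal.span_singleton_le_iff_mem _).mpr h1)
      (Ideal.pow_le_pow_right (Nat.le_succ _))
  have hmem : r ∈ Ideal.span {r} ⊔ P ^ (k + 1) :=
    Submodule.mem_sup_left (Ideal.mem_span_singleton_self r)
  have hlt : P ^ (k + 1) < Ideal.span {r} ⊔ P ^ (k + 1) :=
    lt_of_le_of_ne le_sup_right fun h => h2 (h ▸ hmem)
  exact le_of_eq (Ideal.eq_prime_pow_of_succ_lt_of_le hP0 hlt hle).symm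

/-- Membership in an ideal from membership in all its prime-power parts. -/
theorem mem_of_forall_le_pow {I : Ideal D} (hI0 : I ≠ ⊥) {x : D}
    (hx : ∀ Q : Ideal D, Q.IsPrime → Q ≠ ⊥ → I ≤ Q → x ∈ Q ^ padicExp Q I) : x ∈ I := by
  by_cases hx0 : x = 0
  · exact hx0 ▸ I.zero_mem
  rw [← Ideal.span_singleton_le_iff_mem, ← Ideal.dvd_iff_le,
    dvd_iff_normalizedFactors_le_normalizedFactors hI0 (by simpa using hx0),
    Multiset.le_iff_count]
  intro Q
  by_cases hQ : Q ∈ normalizedFactors I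
  · have hQp : Prime Q := prime_of_normalized_factor Q hQ
    have hQP : Q.IsPrime := Ideal.isPrime_of_prime hQp
    have hQ0 : Q ≠ ⊥ := hQp.ne_zero
    have hIQ : I ≤ Q := Ideal.le_of_dvd (dvd_of_mem_normalizedFactors hQ)
    have h1 : x ∈ Q ^ padicExp Q I := hx Q hQP hQ0 hIQ
    have h2 := (mem_pow_iff_padicExp hQP hQ0 hx0 _).mp h1
    rw [padicExp_eq_count hQP hQ0 hI0] at h2
    calc Multiset.count Q (normalizedFactors I)
        ≤ padicExp Q (Ideal.span {x}) := h2
      _ = Multiset.count Q (normalizedFactors (Ideal.span {x})) :=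
          padicExp_eq_count hQP hQ0 (by simpa using hx0)
  · rw [Multiset.count_eq_zero_of_notMem hQ]
    exact Nat.zero_le _

theorem exists_prime_padicExp_lt {I : Ideal D} (hI0 : I ≠ ⊥) {x : D} (hx0 : x ≠ 0)
    (hx : x ∉ I) : ∃ M : Ideal D, M.IsPrime ∧ M ≠ ⊥ ∧ I ≤ M ∧
      padicExp M (Ideal.span {x}) < padicExp M I := by
  have h : ¬ normalizedFactors I ≤ normalizedFactors (Ideal.span {x}) := by
    intro h
    exact hx ((Ideal.span_singleton_le_iff_mem _).mp (Ideal.le_of_dvd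
      ((dvd_iff_normalizedFactors_le_normalizedFactors hI0 (by simpa using hx0)).mpr h)))
  rw [Multiset.le_iff_count] at h
  push_neg at h
  obtain ⟨M, hM⟩ := h
  have hMmem : M ∈ normalizedFactors I := by
    rw [← Multiset.count_pos]
    omega
  have hMp : Prime M := prime_of_normalized_factor M hMmem
  have hMP : M.IsPrime := Ideal.isPrime_of_prime hMp
  have hM0 : M ≠ ⊥ := hMp.ne_zero
  refine ⟨M, hMP, hM0, Ideal.le_of_dvd (dvd_of_mem_normalizedFactors hMmem), ?_⟩
  rw [padicExp_eq_count hMP hM0 (by simpa using hx0), padicExp_eq_count hMP hM0 hI0]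
  omega

end DedHelpers

section TwoRing

variable {S : Type*} [CommRing S] [IsDomain S] [IsDedekindDomain S] (R : Subring S)
  [IsDedekindDomain ↥R]

theorem map_ne_bot {A : Ideal ↥R} (hA : A ≠ ⊥) : Ideal.map R.subtype A ≠ ⊥ := by
  obtain ⟨a, haA, ha0⟩ := (Submodule.ne_bot_iff A).mp hA
  intro h
  have h2 : (a : S) ∈ Ideal.map R.subtype A := Ideal.mem_map_of_mem _ haA
  rw [h, Ideal.mem_bot] at h2
  exact ha0 (by ext; simpa using h2)

variable [DecidableEq (Ideal S)] [DecidableEq (Ideal ↥R)]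

theorem padicExp_map_eq {M : Ideal S} (hM : M.IsPrime) (hM0 : M ≠ ⊥)
    (hP0 : M.comap R.subtype ≠ ⊥) {A : Ideal ↥R} (hA : A ≠ ⊥) :
    padicExp M (Ideal.map R.subtype A) =
      padicExp M (Ideal.map R.subtype (M.comap R.subtype)) * padicExp (M.comap R.subtype) A := by
  set P : Ideal ↥R := M.comap R.subtype with hPdef
  have hP : P.IsPrime := Ideal.IsPrime.comap _
  induction A using UniqueFactorizationMonoid.induction_on_prime with
  | h₁ => exact absurd rfl hA
  | h₂ A hAu =>
      rw [Ideal.isUnit_iff.mp hAu, Ideal.map_top, padicExp_top hM hM0, padicExp_top hP hP0,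
        mul_zero]
  | h₃ A q hA' hq ih =>
      have hq0 : q ≠ ⊥ := hq.ne_zero
      have hqP : q.IsPrime := Ideal.isPrime_of_prime hq
      have hqmax : q.IsMaximal := Ring.DimensionLEOne.maximalOfPrime hq0 hqP
      have hmq : Ideal.map R.subtype q ≠ ⊥ := map_ne_bot R hq0
      have hmA : Ideal.map R.subtype A ≠ ⊥ := map_ne_bot R hA'
      rw [Ideal.map_mul, padicExp_mul hM hM0 hmq hmA, padicExp_mul hP hP0 hq.ne_zero hA',
        ih hA', mul_add]
      congr 1
      by_cases hqeq : q = P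
      · rw [hqeq]
        have h1 : padicExp P P = 1 := by simpa using padicExp_prime_pow hP hP0 1
        rw [h1, mul_one]
      · have h1 : padicExp P q = 0 := by
          refine padicExp_eq_zero_of_not_le hP hP0 hq0 fun hle => hqeq ?_
          exact hqmax.eq_of_le hP.ne_top hle
        have h2 : padicExp M (Ideal.map R.subtype q) = 0 := by
          refine padicExp_eq_zero_of_not_le hM hM0 hmq fun hle => hqeq ?_
          refine hqmax.eq_of_le hP.ne_top fun a ha => ?_
          exact Ideal.mem_comap.mpr (hle (Ideal.mem_map_of_mem _ ha))
        rw [h1, h2, mul_zero]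

theorem padicExp_span_coe {M : Ideal S} (hM : M.IsPrime) (hM0 : M ≠ ⊥)
    (hP0 : M.comap R.subtype ≠ ⊥) {x : ↥R} (hx : x ≠ 0) :
    padicExp M (Ideal.span {(x : S)}) =
      padicExp M (Ideal.map R.subtype (M.comap R.subtype))
        * padicExp (M.comap R.subtype) (Ideal.span {x}) := by
  have h : Ideal.map R.subtype (Ideal.span {x}) = Ideal.span {(x : S)} := by
    rw [Ideal.map_span, Set.image_singleton]
    rfl
  rw [← h]
  exact padicExp_map_eq R hM hM0 hP0 (by simpa using hx)

set_option maxHeartbeats 1600000 in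
theorem rank_lt_two_iff_surj {M : Ideal S} (hM : M.IsPrime) (hM0 : M ≠ ⊥)
    (hP0 : M.comap R.subtype ≠ ⊥) :
    ¬ (2 ≤ @Module.rank (↥R ⧸ M.comap R.subtype) (S ⧸ M)
        _ _ (Ideal.quotientMap M R.subtype le_rfl).toModule) ↔
      ∀ s : S, ∃ t : ↥R, s - (t : S) ∈ M := by
  letI : M.IsMaximal := Ring.DimensionLEOne.maximalOfPrime hM0 hM
  letI : (M.comap R.subtype).IsMaximal :=
    Ring.DimensionLEOne.maximalOfPrime hP0 (Ideal.IsPrime.comap _)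
  letI : Field (↥R ⧸ M.comap R.subtype) := Ideal.Quotient.field _
  letI : Field (S ⧸ M) := Ideal.Quotient.field _
  letI inst := (Ideal.quotientMap M R.subtype le_rfl).toModule
  letI : Module.Free (↥R ⧸ M.comap R.subtype) (S ⧸ M) := Module.Free.of_divisionRing _ _
  set κ := Ideal.quotientMap M R.subtype le_rfl with hκ
  have hsmul : ∀ (t : ↥R ⧸ M.comap R.subtype) (x : S ⧸ M), t • x = κ t * x := fun _ _ => rfl
  constructor
  · intro hrank s
    have h1 : Module.rank (↥R ⧸ M.comap R.subtype) (S ⧸ M) ≤ 1 := by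
      have h2 := (Cardinal.nat_succ 1)
      rw [not_le] at hrank
      rw [show ((2:ℕ):Cardinal) = (2 : Cardinal) by norm_num] at h2
      rw [show ((1:ℕ):Cardinal) = (1 : Cardinal) by norm_num] at h2
      rw [h2] at hrank
      exact Order.lt_succ_iff.mp hrank
    obtain ⟨v₀, hv₀⟩ := rank_le_one_iff.mp h1
    obtain ⟨r₁, hr₁⟩ := hv₀ 1
    obtain ⟨r, hr⟩ := hv₀ (Ideal.Quotient.mk M s)
    have hr₁0 : r₁ ≠ 0 := by
      intro h; rw [h, zero_smul] at hr₁; exact one_ne_zero hr₁.symm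
    obtain ⟨t, ht⟩ := Ideal.Quotient.mk_surjective (I := M.comap R.subtype) (r * r₁⁻¹)
    refine ⟨t, ?_⟩
    rw [← Ideal.Quotient.eq, ← hr]
    calc r • v₀ = (r * r₁⁻¹ * r₁) • v₀ := by
          rw [mul_assoc, inv_mul_cancel₀ hr₁0, mul_one]
      _ = (r * r₁⁻¹) • (r₁ • v₀) := by rw [smul_smul]
      _ = (r * r₁⁻¹) • (1 : S ⧸ M) := by rw [hr₁]
      _ = κ (r * r₁⁻¹) * 1 := hsmul _ _
      _ = Ideal.Quotient.mk M ↑t := by rw [mul_one, ← ht, hκ, Ideal.quotientMap_mk]; rfl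
  · intro hsurj hrank
    have h1 : Module.rank (↥R ⧸ M.comap R.subtype) (S ⧸ M) ≤ 1 := by
      refine rank_le_one_iff.mpr ⟨1, fun v => ?_⟩
      obtain ⟨s, rfl⟩ := Ideal.Quotient.mk_surjective (I := M) v
      obtain ⟨t, ht⟩ := hsurj s
      refine ⟨Ideal.Quotient.mk _ t, ?_⟩
      rw [hsmul, mul_one, hκ, Ideal.quotientMap_mk]
      exact (Ideal.Quotient.eq (I := M)).mpr (by simpa using (M.neg_mem ht))
    exact absurd (le_trans hrank h1) (by norm_num)

end TwoRing

section Conductor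

variable {S : Type*} [CommRing S] (R : Subring S) (I : Ideal S)

/-- `R + I` as a subring of `S`. -/
def addSubring : Subring S where
  carrier := {x : S | ∃ r ∈ R, ∃ a ∈ I, x = r + a}
  zero_mem' := ⟨0, R.zero_mem, 0, I.zero_mem, by simp⟩
  one_mem' := ⟨1, R.one_mem, 0, I.zero_mem, by simp⟩
  add_mem' := by
    rintro x y ⟨r, hr, a, ha, rfl⟩ ⟨r', hr', a', ha', rfl⟩
    exact ⟨r + r', R.add_mem hr hr', a + a', I.add_mem ha ha', by ring⟩
  neg_mem' := by
    rintro x ⟨r, hr, a, ha, rfl⟩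
    exact ⟨-r, R.neg_mem hr, -a, I.neg_mem ha, by ring⟩
  mul_mem' := by
    rintro x y ⟨r, hr, a, ha, rfl⟩ ⟨r', hr', a', ha', rfl⟩
    refine ⟨r * r', R.mul_mem hr hr', r * a' + a * r' + a * a', ?_, by ring⟩
    exact I.add_mem (I.add_mem (I.mul_mem_left r ha') (I.mul_mem_right r' ha))
      (I.mul_mem_right a' ha)

theorem isConductorIdeal_of (h : ∀ x : S, (∀ s : S, x * s ∈ addSub R I) → x ∈ I) :
    IsConductorIdeal R I := by
  refine ⟨addSubring R I, fun r hr => ⟨r, hr, 0, I.zero_mem, by simp⟩, ?_⟩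
  ext x
  constructor
  · intro hx s
    exact ⟨0, R.zero_mem, x * s, I.mul_mem_right s hx, by simp⟩
  · intro hx
    exact h x hx

theorem not_isConductorIdeal_of (x : S) (hxI : x ∉ I)
    (hx : ∀ s : S, x * s ∈ addSub R I) : ¬ IsConductorIdeal R I := by
  rintro ⟨V, hRV, hIV⟩
  have hIsubV : ∀ y ∈ I, y ∈ V := by
    intro y hy
    have h1 : ∀ s : S, y * s ∈ V.toAddSubgroup := by rwa [hIV] at hy
    simpa using h1 1
  refine hxI ?_
  rw [hIV]
  intro s
  obtain ⟨r, hr, a, ha, heq⟩ := hx s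
  show x * s ∈ V
  rw [heq]
  exact V.add_mem (hRV hr) (hIsubV a ha)

end Conductor

set_option maxHeartbeats 2000000 in
/-- Furtwängler-type criterion: let `S` and `R ⊆ S` be Dedekind domains and `I` an ideal
of `S` with `I ∩ R ≠ 0`. With `e_Q = v_Q((Q ∩ R)S)` and `f_Q = dim_{R/(Q ∩ R)}(S/Q)`,
the ideal `I` is an `R`-conductor ideal of `S` iff every prime `M ⊇ I` satisfies
(a) `f_M ≥ 2`, or (b) `e_M ∤ (v_M(I) - 1)`, or (c) `(v_M(I) - 1)/e_M < v_Q(I)/e_Q` for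
some prime `Q ≠ M` of `S` containing `I` with `Q ∩ R = M ∩ R`. -/
theorem stmt_18 {S : Type*} [CommRing S] [IsDomain S] [IsDedekindDomain S]
    (R : Subring S) [IsDedekindDomain ↥R] (I : Ideal S)
    (hI : I.comap R.subtype ≠ ⊥) :
    IsConductorIdeal R I ↔
      ∀ M : Ideal S, M.IsPrime → I ≤ M →
        (2 ≤ @Module.rank (↥R ⧸ M.comap R.subtype) (S ⧸ M) _ _
            (Ideal.quotientMap M R.subtype le_rfl).toModule ∨
        ¬ ((padicExp M (Ideal.map R.subtype (M.comap R.subtype)) : ℤ) ∣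
              (padicExp M I : ℤ) - 1) ∨
        ∃ Q : Ideal S, Q.IsPrime ∧ I ≤ Q ∧ Q ≠ M ∧
          Q.comap R.subtype = M.comap R.subtype ∧
          ((padicExp M I : ℚ) - 1) /
              (padicExp M (Ideal.map R.subtype (M.comap R.subtype)) : ℚ) <
            (padicExp Q I : ℚ) /
              (padicExp Q (Ideal.map R.subtype (Q.comap R.subtype)) : ℚ)) := by
  classical
  have hI0 : I ≠ ⊥ := by
    intro h
    apply hI
    rw [h]
    ext x
    simp only [Ideal.mem_comap, Ideal.mem_bot]
    exact ⟨fun hx => by ext; simpa using hx, fun hx => by rw [hx]; rfl⟩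
  constructor
  · -- conductor ideal implies the criterion
    intro hcond M hM hIM
    by_contra hcon
    push_neg at hcon
    obtain ⟨hfM, hb, hc⟩ := hcon
    have hM0 : M ≠ ⊥ := fun h => hI0 (le_bot_iff.mp (h ▸ hIM))
    have hP0 : M.comap R.subtype ≠ ⊥ :=
      fun h => hI (le_bot_iff.mp (h ▸ Ideal.comap_mono hIM))
    set P := M.comap R.subtype with hPdef
    have hPprime : P.IsPrime := Ideal.IsPrime.comap _
    have hmapP0 : Ideal.map R.subtype P ≠ ⊥ := map_ne_bot R hP0
    set e := padicExp M (Ideal.map R.subtype P) with hedef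
    set a := padicExp M I with hadef
    have he1 : 1 ≤ e := by
      rw [hedef, ← le_pow_iff_padicExp hM hM0 hmapP0 1, pow_one]
      exact Ideal.map_le_iff_le_comap.mpr le_rfl
    have ha1 : 1 ≤ a := by
      rw [hadef, ← le_pow_iff_padicExp hM hM0 hI0 1, pow_one]
      exact hIM
    obtain ⟨z, hz⟩ := hb
    have hz0 : 0 ≤ z := by nlinarith [hz, Int.natCast_pos.mpr (lt_of_lt_of_le zero_lt_one he1)]
    set k := z.toNat with hkdef
    have hak : a = e * k + 1 := by
      have h1 : (a : ℤ) = e * k + 1 := by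
        rw [hkdef, Int.toNat_of_nonneg hz0]
        omega
      exact_mod_cast h1
    -- the auxiliary finite set of primes of R below prime factors of I other than P
    set T : Finset (Ideal ↥R) :=
      ((normalizedFactors I).toFinset.image (fun Q => Q.comap R.subtype)).erase P with hTdef
    have hT : ∀ P' ∈ T, P'.IsPrime ∧ P' ≠ ⊥ ∧ P' ≠ P := by
      intro P' hP'
      rw [hTdef, Finset.mem_erase, Finset.mem_image] at hP'
      obtain ⟨hne, Q, hQmem, rfl⟩ := hP'
      rw [Multiset.mem_toFinset] at hQmem
      have hQp : Prime Q := prime_of_normalized_factor Q hQmem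
      have hQP : Q.IsPrime := Ideal.isPrime_of_prime hQp
      have hIQ : I ≤ Q := Ideal.le_of_dvd (dvd_of_mem_normalizedFactors hQmem)
      exact ⟨Ideal.IsPrime.comap _,
        fun h => hI (le_bot_iff.mp (h ▸ Ideal.comap_mono hIQ)), hne⟩
    set N := (normalizedFactors I).card with hNdef
    obtain ⟨r, hrk, hrk1, hrT⟩ := exists_exact_val P hPprime hP0 T hT k N
    have hr0 : r ≠ 0 := fun h => hrk1 (h ▸ zero_mem _)
    have hvPr : padicExp P (Ideal.span {r}) = k := padicExp_span_eq hPprime hP0 hrk hrk1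
    have hvMr : padicExp M (Ideal.span {(r : S)}) = e * k := by
      rw [padicExp_span_coe R hM hM0 hP0 hr0, ← hPdef, ← hedef, hvPr]
    have hr0S : (r : S) ≠ 0 := fun h => hr0 (by ext; simpa using h)
    have hrnotI : (r : S) ∉ I := by
      intro hmem
      have h2 : Ideal.span {(r : S)} ≤ M ^ a :=
        ((Ideal.span_singleton_le_iff_mem _).mpr hmem).trans (le_pow_padicExp hM hM0 hI0)
      have h1 : a ≤ padicExp M (Ideal.span {(r : S)}) :=
        (le_pow_iff_padicExp hM hM0 (by simpa using hr0S) a).mp h2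
      omega
    have hsurj := (rank_lt_two_iff_surj R hM hM0 hP0).mp (not_le.mpr hfM)
    -- r * S ⊆ R + I
    have hrs : ∀ s : S, (r : S) * s ∈ addSub R I := by
      intro s
      obtain ⟨t, ht⟩ := hsurj s
      set m := s - (t : S) with hmdef
      have hrm : (r : S) * m ∈ I := by
        refine mem_of_forall_le_pow hI0 ?_
        intro Q hQP hQ0 hIQ
        by_cases hQM : Q = M
        · subst hQM
          have h1 : (r : S) ∈ (Ideal.map R.subtype P) ^ k := by
            rw [← Ideal.map_pow]
            exact Ideal.mem_map_of_mem _ hrk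
          have h2 : (r : S) ∈ Q ^ (e * k) := by
            have h3 : (Ideal.map R.subtype P) ^ k ≤ Q ^ (e * k) := by
              rw [pow_mul]
              exact Ideal.pow_right_mono (le_pow_padicExp hQP hQ0 hmapP0) k
            exact h3 h1
          have h4 : (r : S) * m ∈ Q ^ (e * k) * Q := Ideal.mul_mem_mul h2 ht
          rw [← pow_succ] at h4
          rwa [← hadef, hak]
        · by_cases hQcomap : Q.comap R.subtype = P
          · have heQ0 : Ideal.map R.subtype (Q.comap R.subtype) ≠ ⊥ := by
              rw [hQcomap]; exact hmapP0
            set eQ := padicExp Q (Ideal.map R.subtype (Q.comap R.subtype)) with heQdef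
            have heQ1 : 1 ≤ eQ := by
              rw [heQdef, ← le_pow_iff_padicExp hQP hQ0 heQ0 1, pow_one]
              exact Ideal.map_le_iff_le_comap.mpr le_rfl
            have hcQ := hc Q hQP hIQ hQM hQcomap
            -- a_Q ≤ eQ * k
            have haQ : padicExp Q I ≤ eQ * k := by
              have he0Q : (0:ℚ) < (eQ : ℚ) := by exact_mod_cast lt_of_lt_of_le zero_lt_one heQ1
              have he0M : (0:ℚ) < (e : ℚ) := by exact_mod_cast lt_of_lt_of_le zero_lt_one he1
              rw [div_le_div_iff₀ he0Q he0M] at hcQ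
              have h5 : ((a : ℚ) - 1) = (e : ℚ) * k := by
                rw [hak]; push_cast; ring
              rw [h5] at hcQ
              have h6 : (padicExp Q I : ℚ) ≤ (eQ : ℚ) * k := by
                nlinarith
              exact_mod_cast h6
            have h1 : (r : S) ∈ (Ideal.map R.subtype P) ^ k := by
              rw [← Ideal.map_pow]
              exact Ideal.mem_map_of_mem _ hrk
            have h2 : (Ideal.map R.subtype P) ^ k ≤ Q ^ (eQ * k) := by
              rw [pow_mul]
              refine Ideal.pow_right_mono ?_ k
              have := le_pow_padicExp hQP hQ0 heQ0
              rwa [← heQdef, hQcomap] at this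
            have h3 : (r : S) ∈ Q ^ padicExp Q I :=
              Ideal.pow_le_pow_right haQ (h2 h1)
            exact Ideal.mul_mem_right m _ h3
          · -- Q lies over a different prime P' of R
            set P' := Q.comap R.subtype with hP'def
            have hP'T : P' ∈ T := by
              rw [hTdef, Finset.mem_erase]
              refine ⟨hQcomap, Finset.mem_image.mpr ⟨Q, ?_, rfl⟩⟩
              rw [Multiset.mem_toFinset, ← Multiset.count_pos]
              have h1 : 1 ≤ padicExp Q I := by
                rw [← le_pow_iff_padicExp hQP hQ0 hI0 1, pow_one]; exact hIQ
              rw [padicExp_eq_count hQP hQ0 hI0] at h1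
              omega
            have h1 : (r : S) ∈ (Ideal.map R.subtype P') ^ N := by
              rw [← Ideal.map_pow]
              exact Ideal.mem_map_of_mem _ (hrT P' hP'T)
            have h2 : (Ideal.map R.subtype P') ^ N ≤ Q ^ N :=
              Ideal.pow_right_mono Ideal.map_comap_le N
            have haQN : padicExp Q I ≤ N := by
              rw [padicExp_eq_count hQP hQ0 hI0, hNdef]
              exact Multiset.count_le_card _ _
            have h3 : (r : S) ∈ Q ^ padicExp Q I :=
              Ideal.pow_le_pow_right haQN (h2 h1)
            exact Ideal.mul_mem_right m _ h3
      have heq : (r : S) * s = ((r * t : ↥R) : S) + (r : S) * m := by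
        push_cast
        rw [hmdef]
        ring
      exact ⟨((r * t : ↥R) : S), (r * t).2, (r : S) * m, hrm, heq⟩
    exact absurd hcond (not_isConductorIdeal_of R I (r : S) hrnotI hrs)
  · -- criterion implies conductor ideal
    intro hcrit
    refine isConductorIdeal_of R I ?_
    intro x hx
    by_contra hxI
    have hx0 : x ≠ 0 := fun h => hxI (h ▸ I.zero_mem)
    obtain ⟨M, hM, hM0, hIM, hclt⟩ := exists_prime_padicExp_lt hI0 hx0 hxI
    have hP0 : M.comap R.subtype ≠ ⊥ :=
      fun h => hI (le_bot_iff.mp (h ▸ Ideal.comap_mono hIM))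
    set P := M.comap R.subtype with hPdef
    have hPprime : P.IsPrime := Ideal.IsPrime.comap _
    have hmapP0 : Ideal.map R.subtype P ≠ ⊥ := map_ne_bot R hP0
    set e := padicExp M (Ideal.map R.subtype P) with hedef
    set a := padicExp M I with hadef
    set c := padicExp M (Ideal.span {x}) with hcdef
    have he1 : 1 ≤ e := by
      rw [hedef, ← le_pow_iff_padicExp hM hM0 hmapP0 1, pow_one]
      exact Ideal.map_le_iff_le_comap.mpr le_rfl
    have ha1 : 1 ≤ a := by
      rw [hadef, ← le_pow_iff_padicExp hM hM0 hI0 1, pow_one]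
      exact hIM
    set TS : Finset (Ideal S) := (normalizedFactors I).toFinset.erase M with hTSdef
    have hTS : ∀ Q ∈ TS, Q.IsPrime ∧ Q ≠ ⊥ ∧ Q ≠ M := by
      intro Q hQ
      rw [hTSdef, Finset.mem_erase, Multiset.mem_toFinset] at hQ
      obtain ⟨hne, hQmem⟩ := hQ
      have hQp : Prime Q := prime_of_normalized_factor Q hQmem
      exact ⟨Ideal.isPrime_of_prime hQp, hQp.ne_zero, hne⟩
    set N := (normalizedFactors I).card with hNdef
    obtain ⟨s, hs1, hs2, hsT⟩ := exists_exact_val M hM hM0 TS hTS (a - 1 - c) N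
    have hs0 : s ≠ 0 := fun h => hs2 (h ▸ zero_mem _)
    have hvs : padicExp M (Ideal.span {s}) = a - 1 - c := padicExp_span_eq hM hM0 hs1 hs2
    set y := x * s with hydef
    have hy0 : y ≠ 0 := mul_ne_zero hx0 hs0
    have hymem : ∀ u : S, y * u ∈ addSub R I := fun u => by
      rw [hydef, mul_assoc]; exact hx (s * u)
    have hvy : padicExp M (Ideal.span {y}) = a - 1 := by
      rw [hydef, ← Ideal.span_singleton_mul_span_singleton,
        padicExp_mul hM hM0 (by simpa using hx0) (by simpa using hs0), hvs, ← hcdef]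
      omega
    have hynotMa : y ∉ M ^ a := by
      intro h
      have h2 := (mem_pow_iff_padicExp hM hM0 hy0 a).mp h
      omega
    have hyMa1 : y ∈ M ^ (a - 1) :=
      (mem_pow_iff_padicExp hM hM0 hy0 _).mpr (le_of_eq hvy.symm)
    have hyQ : ∀ Q : Ideal S, Q.IsPrime → Q ≠ ⊥ → I ≤ Q → Q ≠ M → y ∈ Q ^ padicExp Q I := by
      intro Q hQP hQ0 hIQ hQM
      have hQTS : Q ∈ TS := by
        rw [hTSdef, Finset.mem_erase, Multiset.mem_toFinset, ← Multiset.count_pos]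
        have h1 : 1 ≤ padicExp Q I := by
          rw [← le_pow_iff_padicExp hQP hQ0 hI0 1, pow_one]; exact hIQ
        rw [padicExp_eq_count hQP hQ0 hI0] at h1
        exact ⟨hQM, by omega⟩
      have haQN : padicExp Q I ≤ N := by
        rw [padicExp_eq_count hQP hQ0 hI0, hNdef]
        exact Multiset.count_le_card _ _
      have h1 : s ∈ Q ^ padicExp Q I := Ideal.pow_le_pow_right haQN (hsT Q hQTS)
      exact Ideal.mul_mem_left _ x h1
    obtain ⟨w, hwR, i, hiI, hyeq⟩ := by
      have h := hymem 1
      rw [mul_one] at h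
      exact h
    have hiMa : i ∈ M ^ a := le_pow_padicExp hM hM0 hI0 hiI
    have hwMa1 : w ∈ M ^ (a - 1) := by
      have hw : w = y - i := by rw [hyeq]; ring
      rw [hw]
      exact sub_mem hyMa1 (Ideal.pow_le_pow_right (by omega) hiMa)
    have hwnotMa : w ∉ M ^ a := fun h => hynotMa (hyeq ▸ add_mem h hiMa)
    have hw0 : w ≠ 0 := fun h => hwnotMa (h ▸ zero_mem _)
    have hvw : padicExp M (Ideal.span {w}) = a - 1 := by
      refine padicExp_span_eq hM hM0 hwMa1 ?_
      have h : a - 1 + 1 = a := by omega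
      rw [h]
      exact hwnotMa
    set ρ : ↥R := ⟨w, hwR⟩ with hρdef
    have hρ0 : ρ ≠ 0 := by
      intro h
      exact hw0 (by simpa [hρdef, Subtype.ext_iff] using h)
    set vP := padicExp P (Ideal.span {ρ}) with hvPdef
    have hcoe : ((ρ : S)) = w := rfl
    have hvMw : padicExp M (Ideal.span {w}) = e * vP := by
      have h := padicExp_span_coe R hM hM0 hP0 hρ0
      rwa [hcoe, ← hPdef, ← hedef, ← hvPdef] at h
    have heb : a - 1 = e * vP := by rw [← hvw, hvMw]
    have ha2 : a = e * vP + 1 := by omega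
    -- surjectivity of R → S/M
    have hsurj : ∀ s' : S, ∃ t : ↥R, s' - (t : S) ∈ M := by
      intro s'
      obtain ⟨w₂, hw₂R, i₂, hi₂, heq2⟩ := hymem s'
      set i₁ := i₂ - i * s' with hi₁def
      have hi₁ : i₁ ∈ I := I.sub_mem hi₂ (I.mul_mem_right s' hiI)
      have heq3 : w * s' = w₂ + i₁ := by
        have hw : w = y - i := by rw [hyeq]; ring
        rw [hw, hi₁def, sub_mul, heq2]
        ring
      have hw₂M : w₂ ∈ M ^ (a - 1) := by
        have h : w₂ = w * s' - i₁ := by rw [heq3]; ring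
        rw [h]
        exact sub_mem (Ideal.mul_mem_right s' _ hwMa1)
          (Ideal.pow_le_pow_right (by omega) (le_pow_padicExp hM hM0 hI0 hi₁))
      set ρ₂ : ↥R := ⟨w₂, hw₂R⟩ with hρ₂def
      have hρ₂P : ρ₂ ∈ P ^ vP := by
        by_cases h0 : ρ₂ = 0
        · rw [h0]; exact zero_mem _
        · have hw₂0 : w₂ ≠ 0 := fun h => h0 (by simp [hρ₂def, Subtype.ext_iff, h])
          have h2 : a - 1 ≤ padicExp M (Ideal.span {w₂}) :=
            (mem_pow_iff_padicExp hM hM0 hw₂0 _).mp hw₂M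
          have h3 : padicExp M (Ideal.span {w₂}) = e * padicExp P (Ideal.span {ρ₂}) := by
            have h := padicExp_span_coe R hM hM0 hP0 h0
            rwa [show ((ρ₂ : S)) = w₂ from rfl, ← hPdef, ← hedef] at h
          have h4 : vP ≤ padicExp P (Ideal.span {ρ₂}) := by
            rw [h3, heb] at h2
            exact Nat.le_of_mul_le_mul_left h2 (by omega)
          exact (mem_pow_iff_padicExp hPprime hP0 h0 vP).mpr h4
      have hρ1 : ρ ∈ P ^ vP := (mem_pow_iff_padicExp hPprime hP0 hρ0 vP).mpr le_rfl
      have hρ2 : ρ ∉ P ^ (vP + 1) := by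
        intro h
        have := (mem_pow_iff_padicExp hPprime hP0 hρ0 (vP + 1)).mp h
        omega
      have hsup := pow_le_span_sup hPprime hP0 hρ1 hρ2
      obtain ⟨u, hu, p, hp, hρ₂eq⟩ := Submodule.mem_sup.mp (hsup hρ₂P)
      obtain ⟨t, hut⟩ := Ideal.mem_span_singleton.mp hu
      refine ⟨t, ?_⟩
      have hpt : ρ * t = ρ₂ - p := by rw [← hρ₂eq, hut]; ring
      have heq4 : w * (s' - (t : S)) = i₁ + ((p : S)) := by
        have h5 : w * (t : S) = ((ρ * t : ↥R) : S) := rfl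
        calc w * (s' - (t : S)) = w * s' - w * (t : S) := by ring
          _ = (w₂ + i₁) - ((ρ₂ - p : ↥R) : S) := by rw [heq3, h5, hpt]
          _ = i₁ + (p : S) := by push_cast [hρ₂def]; ring
      have hkey : w * (s' - (t : S)) ∈ M ^ a := by
        rw [heq4]
        refine add_mem (le_pow_padicExp hM hM0 hI0 hi₁) ?_
        have h6 : (p : S) ∈ (Ideal.map R.subtype P) ^ (vP + 1) := by
          rw [← Ideal.map_pow]
          exact Ideal.mem_map_of_mem _ hp
        have h7 : (Ideal.map R.subtype P) ^ (vP + 1) ≤ M ^ (e * (vP + 1)) := by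
          rw [pow_mul]
          exact Ideal.pow_right_mono (le_pow_padicExp hM hM0 hmapP0) _
        have h8 : e * (vP + 1) = e * vP + e := by ring
        refine Ideal.pow_le_pow_right ?_ (h7 h6)
        rw [h8]
        omega
      by_cases hts : s' - (t : S) = 0
      · rw [hts]; exact zero_mem _
      · have h5 : padicExp M (Ideal.span {w * (s' - (t : S))}) =
            (a - 1) + padicExp M (Ideal.span {s' - (t : S)}) := by
          rw [← Ideal.span_singleton_mul_span_singleton,
            padicExp_mul hM hM0 (by simpa using hw0) (by simpa using hts), hvw]
        have h6 : a ≤ padicExp M (Ideal.span {w * (s' - (t : S))}) :=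
          (mem_pow_iff_padicExp hM hM0 (mul_ne_zero hw0 hts) a).mp hkey
        have h7 : 1 ≤ padicExp M (Ideal.span {s' - (t : S)}) := by omega
        have h9 := (mem_pow_iff_padicExp hM hM0 hts 1).mpr h7
        rwa [pow_one] at h9
    -- now derive the contradiction from the criterion at M
    rcases hcrit M hM hIM with hA | hB | hC
    · exact absurd hA ((rank_lt_two_iff_surj R hM hM0 hP0).mpr hsurj)
    · refine hB ⟨(vP : ℤ), ?_⟩
      have h1 : ((a - 1 : ℕ) : ℤ) = (a : ℤ) - 1 := by omega
      rw [show padicExp M I = a from rfl, show padicExp M (Ideal.map R.subtype (M.comap R.subtype)) = e from rfl]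
      rw [← h1, heb]
      push_cast
      ring
    · obtain ⟨Q, hQP, hIQ, hQM, hQcomap, hlt⟩ := hC
      have hQ0 : Q ≠ ⊥ := fun h => hI0 (le_bot_iff.mp (h ▸ hIQ))
      have hwQ : w ∈ Q ^ padicExp Q I := by
        have h1 : y ∈ Q ^ padicExp Q I := hyQ Q hQP hQ0 hIQ hQM
        have h2 : i ∈ Q ^ padicExp Q I := le_pow_padicExp hQP hQ0 hI0 hiI
        have hw : w = y - i := by rw [hyeq]; ring
        rw [hw]
        exact sub_mem h1 h2
      have hQcomap0 : Q.comap R.subtype ≠ ⊥ := by rw [hQcomap]; exact hP0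
      have h3 : padicExp Q (Ideal.span {w}) =
          padicExp Q (Ideal.map R.subtype (Q.comap R.subtype)) *
            padicExp (Q.comap R.subtype) (Ideal.span {ρ}) := by
        have h := padicExp_span_coe R hQP hQ0 hQcomap0 hρ0
        rwa [hcoe] at h
      rw [hQcomap] at h3
      set eQ := padicExp Q (Ideal.map R.subtype (Q.comap R.subtype)) with heQdef
      have heQe : eQ = padicExp Q (Ideal.map R.subtype P) := by rw [heQdef, hQcomap]
      have heQ1 : 1 ≤ eQ := by
        rw [heQe, ← le_pow_iff_padicExp hQP hQ0 hmapP0 1, pow_one]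
        refine Ideal.map_le_iff_le_comap.mpr ?_
        rw [hQcomap]
      have haQ : padicExp Q I ≤ eQ * vP := by
        have h4 := (mem_pow_iff_padicExp hQP hQ0 hw0 _).mp hwQ
        rw [h3, ← heQe] at h4
        exact h4
      -- contradiction with the strict inequality
      have he0Q : (0:ℚ) < (eQ : ℚ) := by exact_mod_cast lt_of_lt_of_le zero_lt_one heQ1
      have he0M : (0:ℚ) < (e : ℚ) := by exact_mod_cast lt_of_lt_of_le zero_lt_one he1
      rw [div_lt_div_iff₀ he0M he0Q] at hlt
      have h5 : ((a : ℚ) - 1) = (e : ℚ) * vP := by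
        rw [ha2]; push_cast; ring
      rw [h5] at hlt
      have h6 : (padicExp Q I : ℚ) ≤ (eQ : ℚ) * vP := by exact_mod_cast haQ
      nlinarith
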